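/- (Up delta-weight: sufficient increase removes an arc from all shortest paths.) Let V be a finite vertex set with arc set A ⊆ V×V and w : A → ℝ an arc-weight function, and let v ∈ V. Let α = (u, d) ∈ A lie on a shortest path from v, i.e., π_w(v, u) + w(α) = π_w(v, d). Suppose there is another arc α' = (u', d) ∈ A with α' ≠ α, and a v→u' path q₀ avoiding α with w(q₀) = π_w(v, u'). Let δ' > π_w(v, u') + w(α') − π_w(v, d), and let w' ≥ w agree with w on all arcs except w'(α) = w(α) + δ'. Then the v→d path obtained by appending α' to q₀ has w'-cost π_w(v, u') + w(α'), and every simple v→d path containing α has w'-cost strictly greater than π_w(v, u') + w(α'). Consequently no w'-shortest simple v→d path contains α. -/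

import Mathlib

/-- An s–t path in the directed graph with vertex set `V` and arc set `A ⊆ V × V`:
a nonempty list of arcs of `A`, consecutive arcs sharing endpoints, whose first arc
leaves `s` and whose last arc enters `t`. -/
def IsPath {V : Type*} (A : Set (V × V)) (s t : V) (p : List (V × V)) : Prop :=
  p ≠ [] ∧ (∀ a ∈ p, a ∈ A) ∧ List.Chain' (fun a b => a.2 = b.1) p ∧
    p.head?.map Prod.fst = some s ∧ p.getLast?.map Prod.snd = some t

/-- Cost of a path for the arc-weight function `c`. -/
def cost {V : Type*} (c : V × V → ℝ) (p : List (V × V)) : ℝ := (p.map c).sum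

/-- The list of vertices visited by a walk given as a list of arcs. -/
def verts {V : Type*} : List (V × V) → List V
  | [] => []
  | a :: rest => a.1 :: (a :: rest).map Prod.snd

/-- A walk is a simple path if it visits no vertex twice. -/
def IsSimple {V : Type*} (p : List (V × V)) : Prop := (verts p).Nodup

section Aux

variable {V : Type*}

lemma cost_append (c : V × V → ℝ) (p q : List (V × V)) :
    cost c (p ++ q) = cost c p + cost c q := by simp [cost]

lemma cost_mono {w w' : V × V → ℝ} (h : ∀ a, w a ≤ w' a) (p : List (V × V)) :
    cost w p ≤ cost w' p :=
  List.sum_le_sum (fun a _ => h a)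

lemma cost_congr {w w' : V × V → ℝ} {p : List (V × V)} (h : ∀ a ∈ p, w' a = w a) :
    cost w' p = cost w p := by
  unfold cost
  rw [List.map_congr_left h]

/-- Appending an arc out of the endpoint extends a path. -/
lemma isPath_concat {A : Set (V × V)} {v s d : V} {q : List (V × V)}
    (hq : IsPath A v s q) (ha : (s, d) ∈ A) : IsPath A v d (q ++ [(s, d)]) := by
  obtain ⟨hne, hA, hch, hhd, hlast⟩ := hq
  refine ⟨by simp, ?_, ?_, ?_, ?_⟩
  · intro a haq
    rcases List.mem_append.1 haq with h | h
    · exact hA a h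
    · simp at h; subst h; exact ha
  · rw [List.Chain', List.isChain_append]
    refine ⟨hch, List.isChain_singleton _, ?_⟩
    intro x hx y hy
    simp at hy
    subst hy
    have hcopy := hlast
    rw [Option.mem_def] at hx
    rw [hx] at hcopy
    simpa using hcopy
  · rw [List.head?_append]
    cases q with
    | nil => exact absurd rfl hne
    | cons a t => simpa using hhd
  · rw [List.getLast?_concat]
    rfl

/-- If the first and last vertex of a path coincide with start `v` and end `d`, and `v = d`,
then the path is not simple. -/
lemma not_simple_of_eq {A : Set (V × V)} {v : V} {p : List (V × V)}
    (hp : IsPath A v v p) : ¬ IsSimple p := by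
  obtain ⟨hne, _, _, hhd, hlast⟩ := hp
  cases p with
  | nil => exact absurd rfl hne
  | cons a t =>
    intro hs
    unfold IsSimple verts at hs
    rw [List.nodup_cons] at hs
    have hhd' : a.1 = v := by simpa using hhd
    -- the last vertex v is in the map of snd
    have hmem : v ∈ (a :: t).map Prod.snd := by
      rw [Option.map_eq_some_iff] at hlast
      obtain ⟨z, hz, hz2⟩ := hlast
      have : z ∈ a :: t := List.mem_of_mem_getLast? hz
      exact hz2 ▸ List.mem_map_of_mem (f := Prod.snd) this
    rw [hhd'] at hs
    exact hs.1 hmem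

/-- A simple path ending at `d` that contains an arc `(u, d)` must end with that arc. -/
lemma simple_last_arc {A : Set (V × V)} {v u d : V} {p : List (V × V)}
    (hp : IsPath A v d p) (hs : IsSimple p) (hm : (u, d) ∈ p) :
    ∃ p₁, p = p₁ ++ [(u, d)] := by
  obtain ⟨hne, _, _, _, hlast⟩ := hp
  have hsplit := List.dropLast_append_getLast hne
  set e := p.getLast hne with he
  have hed : e.2 = d := by
    rw [List.getLast?_eq_getLast hne] at hlast
    simpa using hlast
  -- Nodup of map snd
  have hnd : (p.map Prod.snd).Nodup := by
    cases p with
    | nil => exact absurd rfl hne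
    | cons a t =>
      unfold IsSimple verts at hs
      exact (List.nodup_cons.1 hs).2
  -- p = dropLast ++ [e]
  have hmap : p.map Prod.snd = p.dropLast.map Prod.snd ++ [d] := by
    conv_lhs => rw [← hsplit]
    simp [hed]
  rw [hmap] at hnd
  have hdnot : d ∉ p.dropLast.map Prod.snd := by
    intro hmem
    have := List.disjoint_of_nodup_append hnd hmem (by simp)
    exact this
  rw [← hsplit] at hm
  rcases List.mem_append.1 hm with h | h
  · exact absurd (List.mem_map_of_mem (f := Prod.snd) h) hdnot
  · simp at h
    exact ⟨p.dropLast, by rw [h]; exact hsplit.symm⟩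

/-- Removing the final arc `(u, d)` from a `v→d` path gives a `v→u` path, if nonempty. -/
lemma isPath_of_concat {A : Set (V × V)} {v u d : V} {p₁ : List (V × V)}
    (hp : IsPath A v d (p₁ ++ [(u, d)])) (hne : p₁ ≠ []) : IsPath A v u p₁ := by
  obtain ⟨_, hA, hch, hhd, _⟩ := hp
  rw [List.Chain', List.isChain_append] at hch
  refine ⟨hne, fun a ha => hA a (List.mem_append_left _ ha), hch.1, ?_, ?_⟩
  · rw [List.head?_append] at hhd
    cases p₁ with
    | nil => exact absurd rfl hne
    | cons a t => simpa using hhd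
  · have := hch.2.2
    rw [List.getLast?_eq_getLast hne]
    have h2 := this (p₁.getLast hne) (by rw [List.getLast?_eq_getLast hne]; rfl)
      (u, d) (by rfl)
    simpa using h2

/-- Any walk with a repeated vertex contains a cycle segment. -/
lemma exists_cycle : ∀ (r : List (V × V)), List.Chain' (fun a b => a.2 = b.1) r →
    ¬ (verts r).Nodup →
    ∃ r₁ c r₂, r = r₁ ++ c ++ r₂ ∧ c ≠ [] ∧
      c.head?.map Prod.fst = c.getLast?.map Prod.snd := by
  intro r
  induction r with
  | nil => intro _ hnd; exact absurd List.nodup_nil hnd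
  | cons a t ih =>
    intro hch hnd
    unfold verts at hnd
    rw [List.nodup_cons] at hnd
    by_cases h1 : a.1 ∈ (a :: t).map Prod.snd
    · -- cycle starting at the very beginning
      obtain ⟨b, hb, hb2⟩ := List.mem_map.1 h1
      obtain ⟨s, t', hst⟩ := List.append_of_mem hb
      refine ⟨[], s ++ [b], t', by rw [hst]; simp, by simp, ?_⟩
      have hh : (s ++ [b]).head? = (a :: t).head? := by
        rw [hst]; cases s <;> simp
      rw [hh, List.getLast?_concat]
      simp [hb2]
    · have h2 : ¬ ((a :: t).map Prod.snd).Nodup := fun h => hnd ⟨h1, h⟩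
      rw [List.map_cons, List.nodup_cons] at h2
      by_cases h3 : a.2 ∈ t.map Prod.snd
      · obtain ⟨b, hb, hb2⟩ := List.mem_map.1 h3
        obtain ⟨s, t', hst⟩ := List.append_of_mem hb
        refine ⟨[a], s ++ [b], t', by rw [hst]; simp, by simp, ?_⟩
        obtain ⟨x, xs, hx⟩ : ∃ x xs, t = x :: xs := by
          cases t with
          | nil => simp at hb
          | cons x xs => exact ⟨x, xs, rfl⟩
        have hax : a.2 = x.1 := by
          rw [hx] at hch
          exact (List.isChain_cons_cons.1 hch).1
        have hh : (s ++ [b]).head? = t.head? := by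
          rw [hst]; cases s <;> simp
        rw [hh, List.getLast?_concat, hx]
        simp [hb2, ← hax]
      · have h4 : ¬ (t.map Prod.snd).Nodup := fun h => h2 ⟨h3, h⟩
        have htne : t ≠ [] := by
          intro h; rw [h] at h4; exact h4 (by simp)
        have hndt : ¬ (verts t).Nodup := by
          cases t with
          | nil => exact absurd rfl htne
          | cons x xs =>
            unfold verts
            rw [List.nodup_cons]
            intro h
            exact h4 h.2
        obtain ⟨r₁, c, r₂, heq, hc, hcyc⟩ := ih hch.tail hndt
        exact ⟨a :: r₁, c, r₂, by rw [heq]; simp, hc, hcyc⟩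

/-- Duplicating a cycle segment preserves being a path. -/
lemma dup_cycle {A : Set (V × V)} {v d : V} {r₁ c r₂ : List (V × V)} (hc : c ≠ [])
    (hcyc : c.head?.map Prod.fst = c.getLast?.map Prod.snd)
    (hp : IsPath A v d (r₁ ++ c ++ r₂)) : IsPath A v d (r₁ ++ c ++ (c ++ r₂)) := by
  obtain ⟨hne, hA, hch, hhd, hlast⟩ := hp
  obtain ⟨h, hh⟩ : ∃ h, c.head? = some h := by
    cases c with
    | nil => exact absurd rfl hc
    | cons x xs => exact ⟨x, rfl⟩
  obtain ⟨l, hl⟩ : ∃ l, c.getLast? = some l := by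
    cases c with
    | nil => exact absurd rfl hc
    | cons x xs => exact ⟨(x :: xs).getLast (by simp), List.getLast?_eq_getLast _⟩
  have hlh : l.2 = h.1 := by
    rw [hh, hl] at hcyc
    simpa using hcyc.symm
  rw [List.append_assoc, List.Chain', List.isChain_append] at hch
  obtain ⟨hch1, hch2, hj1⟩ := hch
  rw [List.isChain_append] at hch2
  obtain ⟨hchc, hchr2, hj2⟩ := hch2
  have hhead : (r₁ ++ c ++ (c ++ r₂)).head? = (r₁ ++ c ++ r₂).head? := by
    simp only [List.append_assoc, List.head?_append, hh]
    cases r₁.head? <;> rfl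
  have hlast2 : (r₁ ++ c ++ (c ++ r₂)).getLast? = (r₁ ++ c ++ r₂).getLast? := by
    simp only [List.getLast?_append, hl]
    cases r₂.getLast? <;> rfl
  refine ⟨by simp [hc], ?_, ?_, ?_, ?_⟩
  · intro a ha
    apply hA
    simp at ha ⊢
    tauto
  · rw [List.append_assoc, List.Chain', List.isChain_append]
    refine ⟨hch1, ?_, ?_⟩
    · rw [List.isChain_append]
      refine ⟨hchc, List.isChain_append.2 ⟨hchc, hchr2, hj2⟩, ?_⟩
      intro x hx y hy
      rw [hl] at hx
      rw [List.head?_append, hh] at hy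
      have hred : (some h).or r₂.head? = some h := rfl
      rw [hred] at hy
      simp only [Option.mem_def, Option.some.injEq] at hx hy
      subst hx
      subst hy
      exact hlh
    · intro x hx y hy
      rw [List.head?_append, hh] at hy
      have hred : (some h).or ((c ++ r₂).head?) = some h := rfl
      rw [hred] at hy
      simp only [Option.mem_def, Option.some.injEq] at hy
      subst hy
      exact hj1 x hx h (by rw [List.head?_append, hh]; rfl)
  · rw [hhead]; exact hhd
  · rw [hlast2]; exact hlast

/-- Removing a cycle segment preserves being a path (when start ≠ end). -/
lemma remove_cycle {A : Set (V × V)} {v d : V} (hvd : v ≠ d)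
    {r₁ c r₂ : List (V × V)} (hc : c ≠ [])
    (hcyc : c.head?.map Prod.fst = c.getLast?.map Prod.snd)
    (hp : IsPath A v d (r₁ ++ c ++ r₂)) : IsPath A v d (r₁ ++ r₂) := by
  obtain ⟨hne, hA, hch, hhd, hlast⟩ := hp
  obtain ⟨h, hh⟩ : ∃ h, c.head? = some h := by
    cases c with
    | nil => exact absurd rfl hc
    | cons x xs => exact ⟨x, rfl⟩
  obtain ⟨l, hl⟩ : ∃ l, c.getLast? = some l := by
    cases c with
    | nil => exact absurd rfl hc
    | cons x xs => exact ⟨(x :: xs).getLast (by simp), List.getLast?_eq_getLast _⟩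
  have hlh : h.1 = l.2 := by
    rw [hh, hl] at hcyc
    simpa using hcyc
  rw [List.append_assoc, List.Chain', List.isChain_append] at hch
  obtain ⟨hch1, hch2, hj1⟩ := hch
  rw [List.isChain_append] at hch2
  obtain ⟨hchc, hchr2, hj2⟩ := hch2
  -- head of whole is: head r₁ if r₁ ≠ [], else h, with fst = v
  have hne' : r₁ ++ r₂ ≠ [] := by
    intro hcontr
    rw [List.append_eq_nil_iff] at hcontr
    obtain ⟨e1, e2⟩ := hcontr
    subst e1; subst e2
    simp only [List.nil_append, List.append_nil] at hhd hlast
    rw [hh] at hhd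
    rw [hl] at hlast
    simp at hhd hlast
    rw [← hhd, hlh, hlast] at hvd
    exact hvd rfl
  refine ⟨hne', ?_, ?_, ?_, ?_⟩
  · intro a ha
    apply hA
    simp at ha ⊢
    tauto
  · rw [List.Chain', List.isChain_append]
    refine ⟨hch1, hchr2, ?_⟩
    intro x hx y hy
    have hxl : x.2 = h.1 := hj1 x hx h (by rw [List.head?_append, hh]; rfl)
    have hly : l.2 = y.1 := hj2 l (by rw [hl]; rfl) y hy
    rw [hxl, hlh, hly]
  · rcases eq_or_ne r₁ [] with h1 | h1
    · subst h1
      simp only [List.nil_append] at hne' hhd ⊢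
      obtain ⟨h2', hh2⟩ : ∃ x, r₂.head? = some x := by
        cases r₂ with
        | nil => simp at hne'
        | cons x xs => exact ⟨x, rfl⟩
      have hv : h.1 = v := by
        rw [List.head?_append, hh] at hhd
        have : (some h).or r₂.head? = some h := rfl
        rw [this] at hhd
        simpa using hhd
      have hly : l.2 = h2'.1 := hj2 l (by rw [hl]; rfl) h2' (by rw [hh2]; rfl)
      rw [hh2, Option.map_some]
      rw [← hv, hlh, hly]
    · obtain ⟨h1', hh1⟩ : ∃ x, r₁.head? = some x := by
        cases r₁ with
        | nil => exact absurd rfl h1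
        | cons x xs => exact ⟨x, rfl⟩
      have e1 : (r₁ ++ r₂).head? = some h1' := by rw [List.head?_append, hh1]; rfl
      have e2 : (r₁ ++ c ++ r₂).head? = some h1' := by
        rw [List.append_assoc, List.head?_append, hh1]; rfl
      rw [e1, ← e2]
      exact hhd
  · rcases eq_or_ne r₂ [] with h2 | h2
    · subst h2
      simp only [List.append_nil] at hne' hlast ⊢
      have h1 : r₁ ≠ [] := hne'
      obtain ⟨l1, hl1⟩ : ∃ x, r₁.getLast? = some x := by
        cases r₁ with
        | nil => exact absurd rfl h1
        | cons x xs => exact ⟨(x :: xs).getLast (by simp), List.getLast?_eq_getLast _⟩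
      have hld : l.2 = d := by
        rw [List.getLast?_append, hl] at hlast
        have : (some l).or r₁.getLast? = some l := rfl
        rw [this] at hlast
        simpa using hlast
      have hl1h : l1.2 = h.1 :=
        hj1 l1 (by rw [hl1]; rfl) h (by simp only [List.append_nil]; rw [hh]; rfl)
      rw [hl1, Option.map_some, hl1h, hlh, hld]
    · obtain ⟨l2, hl2⟩ : ∃ x, r₂.getLast? = some x := by
        cases r₂ with
        | nil => exact absurd rfl h2
        | cons x xs => exact ⟨(x :: xs).getLast (by simp), List.getLast?_eq_getLast _⟩
      have e1 : (r₁ ++ r₂).getLast? = some l2 := by rw [List.getLast?_append, hl2]; rfl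
      have e2 : (r₁ ++ c ++ r₂).getLast? = some l2 := by rw [List.getLast?_append, hl2]; rfl
      rw [e1, ← e2]
      exact hlast

/-- A cycle segment on a path has nonnegative cost, given a lower bound on path costs. -/
lemma cycle_nonneg {A : Set (V × V)} {v d : V} {w : V × V → ℝ} {πd : ℝ}
    (hlb : ∀ s, IsPath A v d s → πd ≤ cost w s)
    {r₁ c r₂ : List (V × V)} (hc : c ≠ [])
    (hcyc : c.head?.map Prod.fst = c.getLast?.map Prod.snd)
    (hp : IsPath A v d (r₁ ++ c ++ r₂)) : 0 ≤ cost w c := by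
  by_contra hneg
  push_neg at hneg
  have key : ∀ k : ℕ, IsPath A v d (r₁ ++ c ++ ((List.replicate k c).flatten ++ r₂)) := by
    intro k
    induction k with
    | zero => simpa using hp
    | succ n ihn =>
      have := dup_cycle hc hcyc ihn
      rw [List.replicate_succ, List.flatten_cons]
      simpa [List.append_assoc] using this
  have costrep : ∀ k : ℕ, cost w ((List.replicate k c).flatten) = k * cost w c := by
    intro k
    induction k with
    | zero => simp [cost]
    | succ n ihn =>
      rw [List.replicate_succ, List.flatten_cons, cost_append, ihn]
      push_cast
      ring
  have costk : ∀ k : ℕ, cost w (r₁ ++ c ++ ((List.replicate k c).flatten ++ r₂)) =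
      cost w (r₁ ++ c ++ r₂) + k * cost w c := by
    intro k
    simp only [cost_append, costrep]
    ring
  obtain ⟨k, hk⟩ := exists_nat_gt ((cost w (r₁ ++ c ++ r₂) - πd) / (-cost w c))
  have hb := hlb _ (key k)
  rw [costk k] at hb
  rw [div_lt_iff₀ (by linarith)] at hk
  nlinarith

/-- Cycle elimination: any `v→d` path with `v ≠ d` contains a simple `v→d` path of no
greater cost, using only its arcs, given a lower bound on all path costs. -/
lemma eliminate {A : Set (V × V)} {v d : V} {w : V × V → ℝ} {πd : ℝ} (hvd : v ≠ d)
    (hlb : ∀ s, IsPath A v d s → πd ≤ cost w s) :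
    ∀ (n : ℕ) (r : List (V × V)), r.length ≤ n → IsPath A v d r →
    ∃ r', IsPath A v d r' ∧ IsSimple r' ∧ cost w r' ≤ cost w r ∧ ∀ a ∈ r', a ∈ r := by
  intro n
  induction n with
  | zero =>
    intro r hlen hp
    rw [Nat.le_zero, List.length_eq_zero_iff] at hlen
    exact absurd hlen hp.1
  | succ n ih =>
    intro r hlen hp
    by_cases hs : IsSimple r
    · exact ⟨r, hp, hs, le_refl _, fun a ha => ha⟩
    · obtain ⟨r₁, c, r₂, heq, hc, hcyc⟩ := exists_cycle r hp.2.2.1 hs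
      rw [heq] at hp
      have hrem := remove_cycle hvd hc hcyc hp
      have hnn := cycle_nonneg hlb hc hcyc hp
      have hlen' : (r₁ ++ r₂).length ≤ n := by
        rw [heq] at hlen
        simp only [List.length_append] at hlen ⊢
        have : 1 ≤ c.length := List.length_pos_iff.2 hc
        omega
      obtain ⟨r', hr'p, hr's, hr'c, hr'm⟩ := ih (r₁ ++ r₂) hlen' hrem
      refine ⟨r', hr'p, hr's, ?_, ?_⟩
      · rw [heq, cost_append, cost_append]
        rw [cost_append] at hr'c
        linarith
      · intro a ha
        have := hr'm a ha
        rw [heq]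
        simp at this ⊢
        tauto

end Aux

/-- Up delta-weight, sufficient increase: increasing the weight of arc `α = (u, d)` (lying on
a shortest path from `v`) by `δ'` strictly larger than `π_w(v,u') + w(α') − π_w(v,d)`, where
`α' = (u', d)` is another arc into `d` reached by a shortest `v→u'` path `q₀` avoiding `α`,
makes the path `q₀ ++ [α']` cost `π_w(v,u') + w(α')` while every simple `v→d` path through
`α` costs strictly more; hence no shortest simple `v→d` path for the new weights contains `α`. -/
theorem up_delta_sufficient {V : Type*} [Fintype V] [DecidableEq V]
    (A : Set (V × V)) (w : V × V → ℝ) (v u d u' : V)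
    (hα : (u, d) ∈ A) (hα' : (u', d) ∈ A) (hαne : (u', d) ≠ (u, d))
    (πu πd πu' : ℝ)
    (hπu : IsLeast {x : ℝ | ∃ p, IsPath A v u p ∧ x = cost w p} πu)
    (hπd : IsLeast {x : ℝ | ∃ p, IsPath A v d p ∧ x = cost w p} πd)
    (hπu' : IsLeast {x : ℝ | ∃ p, IsPath A v u' p ∧ x = cost w p} πu')
    (hon : πu + w (u, d) = πd)
    (q0 : List (V × V)) (hq0 : IsPath A v u' q0) (hq0avoid : (u, d) ∉ q0)
    (hq0cost : cost w q0 = πu')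
    (δ' : ℝ) (hδ : πu' + w (u', d) - πd < δ')
    (w' : V × V → ℝ) (hw'ge : ∀ a, w a ≤ w' a)
    (hw'eq : ∀ a, a ≠ (u, d) → w' a = w a)
    (hw'α : w' (u, d) = w (u, d) + δ') :
    cost w' (q0 ++ [(u', d)]) = πu' + w (u', d) ∧
    (∀ p, IsPath A v d p → IsSimple p → (u, d) ∈ p →
        πu' + w (u', d) < cost w' p) ∧
    (∀ p, IsPath A v d p → IsSimple p →
        (∀ q, IsPath A v d q → IsSimple q → cost w' p ≤ cost w' q) → (u, d) ∉ p) := by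
  have hlbu : ∀ p, IsPath A v u p → πu ≤ cost w p := fun p hp => hπu.2 ⟨p, hp, rfl⟩
  have hlbd : ∀ p, IsPath A v d p → πd ≤ cost w p := fun p hp => hπd.2 ⟨p, hp, rfl⟩
  have hlbu' : ∀ p, IsPath A v u' p → πu' ≤ cost w p := fun p hp => hπu'.2 ⟨p, hp, rfl⟩
  -- Part 1
  have part1 : cost w' (q0 ++ [(u', d)]) = πu' + w (u', d) := by
    rw [cost_append]
    have h1 : cost w' q0 = cost w q0 :=
      cost_congr (fun a ha => hw'eq a (fun h => hq0avoid (h ▸ ha)))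
    have h2 : cost w' [(u', d)] = w' (u', d) := by simp [cost]
    rw [h1, h2, hq0cost, hw'eq _ hαne]
  -- Part 2
  have part2 : ∀ p, IsPath A v d p → IsSimple p → (u, d) ∈ p →
      πu' + w (u', d) < cost w' p := by
    intro p hp hs hm
    obtain ⟨p₁, hp₁⟩ := simple_last_arc hp hs hm
    subst hp₁
    rw [cost_append]
    have hcα : cost w' [(u, d)] = w (u, d) + δ' := by simp [cost, hw'α]
    rcases eq_or_ne p₁ [] with h1 | h1
    · subst h1
      simp only [List.nil_append] at hp ⊢
      -- then v = u, and [(u,d)] is a v→d path of cost w(u,d), so πd ≤ w(u,d)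
      have hvd : πd ≤ w (u, d) := by
        have := hlbd [(u, d)] hp
        simpa [cost] using this
      have hz : cost w' ([] : List (V × V)) = 0 := by simp [cost]
      rw [hz, hcα]
      linarith
    · have hpu : IsPath A v u p₁ := isPath_of_concat hp h1
      have h2 : πu ≤ cost w p₁ := hlbu p₁ hpu
      have h3 : cost w p₁ ≤ cost w' p₁ := cost_mono hw'ge p₁
      rw [hcα]
      linarith
  refine ⟨part1, part2, ?_⟩
  -- Part 3
  intro p hp hs hmin hm
  have hvd : v ≠ d := by
    intro h
    subst h
    exact not_simple_of_eq hp hs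
  have hr : IsPath A v d (q0 ++ [(u', d)]) := isPath_concat hq0 hα'
  obtain ⟨r', hr'p, hr's, hr'c, hr'm⟩ :=
    eliminate hvd hlbd (q0 ++ [(u', d)]).length (q0 ++ [(u', d)]) (le_refl _) hr
  have hr'avoid : (u, d) ∉ r' := by
    intro hmem
    rcases List.mem_append.1 (hr'm _ hmem) with h | h
    · exact hq0avoid h
    · simp at h
      subst h
      exact hαne rfl
  have hr'cost : cost w' r' = cost w r' :=
    cost_congr (fun a ha => hw'eq a (fun h => hr'avoid (h ▸ ha)))
  have h1 : cost w' p ≤ cost w' r' := hmin r' hr'p hr's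
  have h2 : πu' + w (u', d) < cost w' p := part2 p hp hs hm
  have h3 : cost w (q0 ++ [(u', d)]) = πu' + w (u', d) := by
    rw [cost_append, hq0cost]
    simp [cost]
  rw [hr'cost] at h1
  rw [h3] at hr'c
  linarith
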